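/- With D, G, Σ as above, let θ be the common overlap number. For Δ ∈ Σ, B a block with B ∩ Δ ≠ ∅, and x ∈ B ∩ Δ, we have θ = [G_{x, B∩Δ} : G_{x,B}], the index of the stabilizer of the pair (x, B) in the stabilizer of the pair (x, B ∩ Δ). -/

import Mathlib

open Pointwise

/-- Corollary 2.2 of the paper: with `D`, `G`, `P` as in Lemma 2.1 and `θ` the
common overlap number, for a class `Δ`, a block `B` meeting `Δ` and a point
`x ∈ B ∩ Δ`, we have `θ = [G_{x,B∩Δ} : G_{x,B}]`. -/
theorem stmt_12 {α : Type*} [Fintype α] [DecidableEq α]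
    (v k lam c θ : ℕ) (𝓑 : Finset (Finset α)) (P : Finset (Finset α))
    (hv : Fintype.card α = v)
    (hk : ∀ B ∈ 𝓑, B.card = k)
    (hlam : ∀ x y : α, x ≠ y → (𝓑.filter (fun B => x ∈ B ∧ y ∈ B)).card = lam)
    (hsym : 𝓑.card = v)
    (hk2 : 2 < k) (hkv : k < v)
    (G : Subgroup (Equiv.Perm α))
    (hGB : ∀ g ∈ G, ∀ B ∈ 𝓑, B.image g ∈ 𝓑)
    (hflag : ∀ (x : α) (B : Finset α), B ∈ 𝓑 → x ∈ B →
      ∀ (y : α) (C : Finset α), C ∈ 𝓑 → y ∈ C →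
        ∃ g ∈ G, g x = y ∧ B.image g = C)
    (hpart : ∀ x : α, ∃! Δ, Δ ∈ P ∧ x ∈ Δ)
    (hGP : ∀ g ∈ G, ∀ Δ ∈ P, Δ.image g ∈ P)
    (hc : ∀ Δ ∈ P, Δ.card = c) (hc1 : 1 < c) (hcv : c < v)
    (hθ : ∀ Δ ∈ P, ∀ B ∈ 𝓑, (B ∩ Δ).Nonempty →
      (𝓑.filter (fun B' => B' ∩ Δ = B ∩ Δ)).card = θ)
    (Δ : Finset α) (hΔ : Δ ∈ P) (B : Finset α) (hB : B ∈ 𝓑)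
    (x : α) (hx : x ∈ B ∩ Δ) :
    θ = Subgroup.relIndex
      (G ⊓ MulAction.stabilizer (Equiv.Perm α) x ⊓
        MulAction.stabilizer (Equiv.Perm α) B)
      (G ⊓ MulAction.stabilizer (Equiv.Perm α) x ⊓
        MulAction.stabilizer (Equiv.Perm α) (B ∩ Δ)) := by
  classical
  have hxB : x ∈ B := (Finset.mem_inter.mp hx).1
  have hxΔ : x ∈ Δ := (Finset.mem_inter.mp hx).2
  set K := G ⊓ MulAction.stabilizer (Equiv.Perm α) x ⊓
      MulAction.stabilizer (Equiv.Perm α) (B ∩ Δ) with hKdef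
  set H := G ⊓ MulAction.stabilizer (Equiv.Perm α) x ⊓
      MulAction.stabilizer (Equiv.Perm α) B with hHdef
  have hsmul : ∀ (g : Equiv.Perm α) (s : Finset α), g • s = s.image g := fun g s => rfl
  have hfixΔ : ∀ g : Equiv.Perm α, g ∈ G → g x = x → g • Δ = Δ := by
    intro g hg hgx
    obtain ⟨Δ', hΔ', huniq⟩ := hpart x
    have h1 : g • Δ = Δ' := huniq _ ⟨by rw [hsmul]; exact hGP g hg Δ hΔ,
      by rw [hsmul]; exact Finset.mem_image.mpr ⟨x, hxΔ, hgx⟩⟩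
    have h2 : Δ = Δ' := huniq _ ⟨hΔ, hxΔ⟩
    rw [h1, h2]
  have hKmem : ∀ g : Equiv.Perm α, g ∈ K ↔ g ∈ G ∧ g x = x ∧ g • (B ∩ Δ) = B ∩ Δ := by
    intro g
    simp only [hKdef, Subgroup.mem_inf, MulAction.mem_stabilizer_iff, Equiv.Perm.smul_def,
      and_assoc]
  have hHmem : ∀ g : Equiv.Perm α, g ∈ H ↔ g ∈ G ∧ g x = x ∧ g • B = B := by
    intro g
    simp only [hHdef, Subgroup.mem_inf, MulAction.mem_stabilizer_iff, Equiv.Perm.smul_def,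
      and_assoc]
  have hHK : H.subgroupOf K = MulAction.stabilizer K B := by
    ext ⟨g, hg⟩
    simp only [Subgroup.mem_subgroupOf, MulAction.mem_stabilizer_iff]
    obtain ⟨hgG, hgx, hgBΔ⟩ := (hKmem g).mp hg
    have hcoe : (⟨g, hg⟩ : K) • B = g • B := rfl
    rw [hcoe]
    constructor
    · intro hgH; exact ((hHmem g).mp hgH).2.2
    · intro hgB; exact (hHmem g).mpr ⟨hgG, hgx, hgB⟩
  have horb : MulAction.orbit K B = ↑(𝓑.filter (fun B' => B' ∩ Δ = B ∩ Δ)) := by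
    ext C
    simp only [Finset.coe_filter, Set.mem_setOf_eq, MulAction.mem_orbit_iff]
    constructor
    · rintro ⟨⟨g, hg⟩, rfl⟩
      obtain ⟨hgG, hgx, hgBΔ⟩ := (hKmem g).mp hg
      have hcoe : (⟨g, hg⟩ : K) • B = g • B := rfl
      rw [hcoe]
      refine ⟨by rw [hsmul]; exact hGB g hgG B hB, ?_⟩
      have hdist : g • (B ∩ Δ) = g • B ∩ g • Δ := Finset.smul_finset_inter
      rw [hfixΔ g hgG hgx] at hdist
      rw [← hdist, hgBΔ]
    · rintro ⟨hC𝓑, hCΔ⟩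
      have hxC : x ∈ C := (Finset.mem_inter.mp (hCΔ ▸ hx)).1
      obtain ⟨g, hgG, hgx, hgBC⟩ := hflag x B hB hxB x C hC𝓑 hxC
      have hgΔ : g • Δ = Δ := hfixΔ g hgG hgx
      have hgK : g ∈ K := (hKmem g).mpr ⟨hgG, hgx, by
        rw [Finset.smul_finset_inter, hgΔ, hsmul, hgBC, hCΔ]⟩
      exact ⟨⟨g, hgK⟩, by rw [show (⟨g, hgK⟩ : K) • B = g • B from rfl, hsmul, hgBC]⟩
  have hne : (B ∩ Δ).Nonempty := ⟨x, hx⟩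
  rw [← hθ Δ hΔ B hB hne]
  unfold Subgroup.relIndex
  rw [hHK, MulAction.index_stabilizer, horb, Set.ncard_coe_finset]
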